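/- For any 2^n × 2^n complex matrix C of rank at most 2^k with C ≠ 0, the sum over all 4^n − 1 non-identity n-qubit Pauli matrices P_a of (Tr(P_a C† P_a C) / Tr(C† C))² is at most 2^{n+k}. -/

import Mathlib

open Matrix
open scoped ComplexOrder

/-- The single-qubit Pauli matrices I, X, Y, Z. -/
noncomputable def pauli : Fin 4 → Matrix (Fin 2) (Fin 2) ℂ :=
  ![(1 : Matrix (Fin 2) (Fin 2) ℂ), !![0, 1; 1, 0],
    !![0, -Complex.I; Complex.I, 0], !![1, 0; 0, -1]]

/-- The `n`-qubit Pauli matrix indexed by `a : Fin n → Fin 4`. -/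
noncomputable def PauliString (n : ℕ) (a : Fin n → Fin 4) :
    Matrix (Fin n → Fin 2) (Fin n → Fin 2) ℂ :=
  Matrix.of fun i j => ∏ k, pauli (a k) (i k) (j k)

open Finset
open scoped ComplexConjugate
set_option maxHeartbeats 1000000

section Aux

lemma pauli_conj (s : Fin 4) (x y : Fin 2) :
    (starRingEnd ℂ) (pauli s x y) = pauli s y x := by
  fin_cases s <;> fin_cases x <;> fin_cases y <;>
    simp [pauli, Matrix.one_apply]

lemma pauli_mul_self (s : Fin 4) : pauli s * pauli s = 1 := by
  fin_cases s <;>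
    simp [pauli, Matrix.one_fin_two, Matrix.mul_fin_two]

lemma pauli_sum_swap (x y j i : Fin 2) :
    ∑ s : Fin 4, pauli s x y * pauli s j i =
      if x = i ∧ y = j then 2 else 0 := by
  fin_cases x <;> fin_cases y <;> fin_cases j <;> fin_cases i <;>
    norm_num [Fin.sum_univ_four, pauli, Matrix.one_apply, Complex.ext_iff, Matrix.cons_val_two, Matrix.cons_val_three]

lemma PauliString_conjTranspose (n : ℕ) (a : Fin n → Fin 4) :
    (PauliString n a)ᴴ = PauliString n a := by
  ext i j
  simp only [conjTranspose_apply, PauliString, of_apply]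
  rw [show (star (∏ k : Fin n, pauli (a k) (j k) (i k)) : ℂ)
      = (starRingEnd ℂ) (∏ k : Fin n, pauli (a k) (j k) (i k)) from rfl, map_prod]
  exact Finset.prod_congr rfl fun k _ => pauli_conj _ _ _

lemma prod_sum_swap {n : ℕ} {α : Type*} [Fintype α] (f : Fin n → α → ℂ) :
    ∑ x : Fin n → α, ∏ k, f k (x k) = ∏ k, ∑ t : α, f k t := by
  classical
  rw [Finset.prod_univ_sum, ← Fintype.piFinset_univ]

lemma PauliString_mul_self (n : ℕ) (a : Fin n → Fin 4) :
    PauliString n a * PauliString n a = 1 := by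
  ext i j
  simp only [mul_apply, PauliString, of_apply, ← Finset.prod_mul_distrib]
  rw [prod_sum_swap (fun k t => pauli (a k) (i k) t * pauli (a k) t (j k))]
  calc ∏ k, ∑ t : Fin 2, pauli (a k) (i k) t * pauli (a k) t (j k)
      = ∏ k, (1 : Matrix (Fin 2) (Fin 2) ℂ) (i k) (j k) := by
        refine Finset.prod_congr rfl fun k _ => ?_
        rw [← pauli_mul_self (a k), mul_apply]
    _ = (1 : Matrix (Fin n → Fin 2) (Fin n → Fin 2) ℂ) i j := by
        by_cases h : i = j
        · simp [h, Matrix.one_apply]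
        · obtain ⟨k, hk⟩ : ∃ k, i k ≠ j k := by
            by_contra hc; push_neg at hc; exact h (funext hc)
          rw [Matrix.one_apply_ne h]
          exact Finset.prod_eq_zero (Finset.mem_univ k) (Matrix.one_apply_ne hk)

lemma string_sum_swap {n : ℕ} (x y j i : Fin n → Fin 2) :
    ∑ a : Fin n → Fin 4, PauliString n a x y * PauliString n a j i =
      if x = i ∧ y = j then (2 : ℂ) ^ n else 0 := by
  simp only [PauliString, of_apply, ← Finset.prod_mul_distrib]
  rw [prod_sum_swap (fun k s => pauli s (x k) (y k) * pauli s (j k) (i k))]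
  simp only [pauli_sum_swap]
  rw [Fintype.prod_ite_zero]
  simp [funext_iff, forall_and, Finset.prod_const]

lemma pauli_twirl {n : ℕ} (M : Matrix (Fin n → Fin 2) (Fin n → Fin 2) ℂ) :
    ∑ a : Fin n → Fin 4, PauliString n a * M * PauliString n a =
      ((2 : ℂ) ^ n * M.trace) • 1 := by
  ext i j
  simp only [Finset.sum_apply, Matrix.sum_apply, mul_apply, Matrix.smul_apply, smul_eq_mul]
  calc ∑ a : Fin n → Fin 4, ∑ y, (∑ x, PauliString n a i x * M x y) * PauliString n a y j
      = ∑ y, ∑ x, M x y * ∑ a : Fin n → Fin 4, PauliString n a i x * PauliString n a y j := by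
        rw [Finset.sum_comm]
        refine Finset.sum_congr rfl fun y _ => ?_
        simp only [Finset.sum_mul, Finset.mul_sum]
        rw [Finset.sum_comm]
        exact Finset.sum_congr rfl fun x _ => Finset.sum_congr rfl fun a _ => by ring
    _ = ∑ y, ∑ x, M x y * if i = j ∧ x = y then (2:ℂ)^n else 0 := by
        simp only [string_sum_swap]
    _ = (2:ℂ)^n * M.trace * (1 : Matrix (Fin n → Fin 2) (Fin n → Fin 2) ℂ) i j := by
        by_cases h : i = j
        · subst h
          simp [Matrix.one_apply, Matrix.trace, Matrix.diag, Finset.mul_sum, and_comm,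
            Finset.sum_ite_eq, mul_comm]
        · simp [Matrix.one_apply_ne h, h]

variable {ι : Type*} [Fintype ι] [DecidableEq ι]

lemma trace_conjTranspose_mul_self_eq (X : Matrix ι ι ℂ) :
    (Xᴴ * X).trace = ((∑ i, ∑ j, Complex.normSq (X i j) : ℝ) : ℂ) := by
  push_cast
  rw [Matrix.trace, Finset.sum_comm]
  refine Finset.sum_congr rfl fun i _ => ?_
  simp only [Matrix.diag_apply, mul_apply, conjTranspose_apply]
  refine Finset.sum_congr rfl fun j _ => ?_
  rw [show (star (X j i) : ℂ) = (starRingEnd ℂ) (X j i) from rfl,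
    ← Complex.normSq_eq_conj_mul_self]

lemma normSq_trace_le_rank_mul (A : Matrix ι ι ℂ) :
    Complex.normSq A.trace ≤ (A.rank : ℝ) * ∑ i, ∑ j, Complex.normSq (A i j) := by
  classical
  set U : Submodule ℂ (EuclideanSpace ℂ ι) := LinearMap.range (Matrix.toEuclideanLin A) with hU
  have hd : A.rank = Module.finrank ℂ U := by
    rw [Matrix.rank_eq_finrank_range_toLin A (PiLp.basisFun 2 ℂ ι) (PiLp.basisFun 2 ℂ ι)]
    rfl
  set d := Module.finrank ℂ U with hdd
  set b := stdOrthonormalBasis ℂ U with hb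
  have hmem : ∀ i : ι, ((WithLp.equiv 2 (ι → ℂ)).symm (fun x => A x i)) ∈ U := by
    intro i
    refine ⟨(WithLp.equiv 2 (ι → ℂ)).symm (Pi.single i 1), ?_⟩
    rw [WithLp.equiv_symm_apply, Matrix.toEuclideanLin_apply_piLp_toLp]
    congr 1
    ext x
    simp [Matrix.mulVec_single]
  set w : ι → U := fun i => ⟨(WithLp.equiv 2 (ι → ℂ)).symm (fun x => A x i), hmem i⟩ with hw
  set u : Fin d → EuclideanSpace ℂ ι := fun m => (b m : EuclideanSpace ℂ ι) with hu
  set c : Fin d → ι → ℂ := fun m i => b.repr (w i) m with hc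
  have hnorm_u : ∀ m, ‖u m‖ = 1 := fun m => by
    rw [hu]; rw [← Submodule.coe_norm]; exact b.orthonormal.1 m
  have h_entry : ∀ i x : ι, A x i = ∑ m, c m i * u m x := by
    intro i x
    have h1 := b.sum_repr (w i)
    have h2 := congrArg (fun z : U => EuclideanSpace.proj (𝕜 := ℂ) x (z : EuclideanSpace ℂ ι)) h1
    simp only [Submodule.coe_sum, Submodule.coe_smul, map_sum, _root_.map_smul, smul_eq_mul] at h2
    exact h2.symm
  have habs : ∀ m, ‖∑ i, c m i * u m i‖ ≤
      Real.sqrt (∑ i, Complex.normSq (c m i)) := by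
    intro m
    set y : EuclideanSpace ℂ ι := (WithLp.equiv 2 (ι → ℂ)).symm (fun i => conj (c m i)) with hy
    have h1 : (∑ i, c m i * u m i) = inner (𝕜 := ℂ) y (u m) := by
      rw [PiLp.inner_apply]
      refine Finset.sum_congr rfl fun i _ => ?_
      simp [y, RCLike.inner_apply, mul_comm]
    have h2 := norm_inner_le_norm (𝕜 := ℂ) y (u m)
    rw [hnorm_u m, mul_one] at h2
    have h3 : ‖y‖ = Real.sqrt (∑ i, Complex.normSq (c m i)) := by
      rw [EuclideanSpace.norm_eq]
      congr 1
      refine Finset.sum_congr rfl fun i _ => ?_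
      have : y i = conj (c m i) := rfl
      rw [this, RCLike.norm_conj]
      rw [← Complex.sq_norm]
    rw [h1]
    rw [h3] at h2
    exact h2
  have htr : A.trace = ∑ m, ∑ i, c m i * u m i := by
    rw [Matrix.trace, Finset.sum_comm]
    exact Finset.sum_congr rfl fun i _ => h_entry i i
  set S : Fin d → ℝ := fun m => ∑ i, Complex.normSq (c m i) with hS
  have hS0 : ∀ m, 0 ≤ S m := fun m => Finset.sum_nonneg fun i _ => Complex.normSq_nonneg _
  have step1 : ‖A.trace‖ ≤ ∑ m, Real.sqrt (S m) := by
    rw [htr]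
    refine le_trans (norm_sum_le _ _) (Finset.sum_le_sum fun m _ => habs m)
  have step2 : (∑ m, Real.sqrt (S m)) ^ 2 ≤ (d : ℝ) * ∑ m, S m := by
    have h := Finset.sum_mul_sq_le_sq_mul_sq Finset.univ (fun _ : Fin d => (1 : ℝ))
      (fun m => Real.sqrt (S m))
    simp only [one_mul, one_pow, Finset.sum_const, Finset.card_univ, Fintype.card_fin,
      nsmul_eq_mul, mul_one] at h
    calc (∑ m, Real.sqrt (S m)) ^ 2 ≤ (d : ℝ) * ∑ m, Real.sqrt (S m) ^ 2 := h
      _ = (d : ℝ) * ∑ m, S m := by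
          congr 1
          exact Finset.sum_congr rfl fun m _ => Real.sq_sqrt (hS0 m)
  have step3 : ∑ m, S m = ∑ i, ∑ j, Complex.normSq (A i j) := by
    have hcol : ∀ i, ∑ m, Complex.normSq (c m i) = ∑ x, Complex.normSq (A x i) := by
      intro i
      have e1 : ∑ m, Complex.normSq (c m i) = ‖b.repr (w i)‖ ^ 2 := by
        rw [EuclideanSpace.norm_eq, Real.sq_sqrt (by positivity)]
        refine Finset.sum_congr rfl fun m _ => ?_
        rw [← Complex.sq_norm]
      have e2 : ‖b.repr (w i)‖ = ‖w i‖ := b.repr.norm_map _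
      have e3 : ‖w i‖ = ‖((w i : EuclideanSpace ℂ ι))‖ := (Submodule.norm_coe _).symm
      have e4 : ‖((w i : EuclideanSpace ℂ ι))‖ ^ 2 = ∑ x, Complex.normSq (A x i) := by
        rw [EuclideanSpace.norm_eq, Real.sq_sqrt (by positivity)]
        refine Finset.sum_congr rfl fun x _ => ?_
        have : (w i : EuclideanSpace ℂ ι) x = A x i := rfl
        rw [this, ← Complex.sq_norm]
      rw [e1, e2, e3, e4]
    calc ∑ m, S m = ∑ i, ∑ m, Complex.normSq (c m i) := Finset.sum_comm
      _ = ∑ i, ∑ x, Complex.normSq (A x i) := Finset.sum_congr rfl fun i _ => hcol i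
      _ = ∑ i, ∑ j, Complex.normSq (A i j) := Finset.sum_comm
  have final : Complex.normSq A.trace ≤ (d : ℝ) * ∑ i, ∑ j, Complex.normSq (A i j) := by
    rw [← Complex.sq_norm]
    calc ‖A.trace‖ ^ 2 ≤ (∑ m, Real.sqrt (S m)) ^ 2 := by
          exact pow_le_pow_left₀ (norm_nonneg _) step1 2
      _ ≤ (d : ℝ) * ∑ m, S m := step2
      _ = (d : ℝ) * ∑ i, ∑ j, Complex.normSq (A i j) := by rw [step3]
  rw [hd]
  exact final

end Aux

/-- For any nonzero `2^n × 2^n` matrix `C` of rank at most `2^k`,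
`∑_{a ≠ 0} (Tr(P_a C† P_a C)/Tr(C† C))² ≤ 2^{n+k}`. -/
theorem sum_sq_pauli_twirl_ratio_le (n k : ℕ)
    (C : Matrix (Fin n → Fin 2) (Fin n → Fin 2) ℂ)
    (hrank : C.rank ≤ 2 ^ k) (hC : C ≠ 0) :
    ∑ a ∈ Finset.univ.filter (fun a : Fin n → Fin 4 => a ≠ fun _ => 0),
        (Matrix.trace (PauliString n a * Cᴴ * PauliString n a * C)
          / Matrix.trace (Cᴴ * C)) ^ 2
      ≤ (2 : ℂ) ^ (n + k) := by
  classical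
  have hPH := PauliString_conjTranspose n
  have hPP : ∀ (a : Fin n → Fin 4) (X : Matrix (Fin n → Fin 2) (Fin n → Fin 2) ℂ),
      PauliString n a * (PauliString n a * X) = X := by
    intro a X
    rw [← mul_assoc, PauliString_mul_self, one_mul]
  set T : ℝ := ∑ i, ∑ j, Complex.normSq (C i j) with hT
  have htrT : (Cᴴ * C).trace = (T : ℂ) := trace_conjTranspose_mul_self_eq C
  have hTpos : 0 < T := by
    obtain ⟨i, j, hij⟩ : ∃ i j, C i j ≠ 0 := by
      by_contra h
      push_neg at h
      exact hC (by ext i j; exact h i j)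
    have hinner : 0 < ∑ j', Complex.normSq (C i j') :=
      Finset.sum_pos' (fun _ _ => Complex.normSq_nonneg _)
        ⟨j, Finset.mem_univ j, Complex.normSq_pos.mpr hij⟩
    exact Finset.sum_pos' (fun _ _ => Finset.sum_nonneg fun _ _ => Complex.normSq_nonneg _)
      ⟨i, Finset.mem_univ i, hinner⟩
  -- conjTranspose of the product
  have h2 : ∀ a, (PauliString n a * Cᴴ * PauliString n a * C)ᴴ
      = Cᴴ * PauliString n a * C * PauliString n a := by
    intro a
    simp only [conjTranspose_mul, conjTranspose_conjTranspose, hPH, mul_assoc]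
  -- the traces are real
  have hreal : ∀ a, (starRingEnd ℂ) ((PauliString n a * Cᴴ * PauliString n a * C).trace)
      = (PauliString n a * Cᴴ * PauliString n a * C).trace := by
    intro a
    calc (starRingEnd ℂ) ((PauliString n a * Cᴴ * PauliString n a * C).trace)
        = ((PauliString n a * Cᴴ * PauliString n a * C)ᴴ).trace := by
          rw [Matrix.trace_conjTranspose]; rfl
      _ = ((Cᴴ * PauliString n a * C) * PauliString n a).trace := by rw [h2 a]
      _ = (PauliString n a * (Cᴴ * PauliString n a * C)).trace := Matrix.trace_mul_comm _ _
      _ = (PauliString n a * Cᴴ * PauliString n a * C).trace := by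
          rw [show PauliString n a * (Cᴴ * PauliString n a * C)
              = PauliString n a * Cᴴ * PauliString n a * C by simp only [mul_assoc]]
  set r : (Fin n → Fin 4) → ℝ :=
    fun a => ((PauliString n a * Cᴴ * PauliString n a * C).trace).re with hr
  have hta : ∀ a, (PauliString n a * Cᴴ * PauliString n a * C).trace = ((r a : ℝ) : ℂ) :=
    fun a => (Complex.conj_eq_iff_re.mp (hreal a)).symm
  set F : (Fin n → Fin 4) → ℝ :=
    fun a => ∑ i, ∑ j, Complex.normSq ((PauliString n a * Cᴴ * PauliString n a * C) i j) with hF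
  have hF0 : ∀ a, 0 ≤ F a :=
    fun a => Finset.sum_nonneg fun _ _ => Finset.sum_nonneg fun _ _ => Complex.normSq_nonneg _
  -- Cauchy-Schwarz with rank
  have hkey : ∀ a, Complex.normSq ((PauliString n a * Cᴴ * PauliString n a * C).trace)
      ≤ (2 : ℝ) ^ k * F a := by
    intro a
    refine le_trans (normSq_trace_le_rank_mul _) ?_
    refine mul_le_mul_of_nonneg_right ?_ (Finset.sum_nonneg fun _ _ =>
      Finset.sum_nonneg fun _ _ => Complex.normSq_nonneg _)
    have h1 : (PauliString n a * Cᴴ * PauliString n a * C).rank ≤ 2 ^ k :=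
      le_trans (Matrix.rank_mul_le_right _ _) hrank
    calc ((PauliString n a * Cᴴ * PauliString n a * C).rank : ℝ)
        ≤ ((2 ^ k : ℕ) : ℝ) := Nat.cast_le.mpr h1
      _ = (2 : ℝ) ^ k := by push_cast; ring
  -- F in terms of the twirl
  have hFtrace : ∀ a, ((F a : ℝ) : ℂ)
      = ((C * Cᴴ) * PauliString n a * (C * Cᴴ) * PauliString n a).trace := by
    intro a
    rw [hF]
    rw [← trace_conjTranspose_mul_self_eq]
    have l1 : (PauliString n a * Cᴴ * PauliString n a * C)ᴴ
        * (PauliString n a * Cᴴ * PauliString n a * C)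
        = Cᴴ * (PauliString n a * (C * (Cᴴ * (PauliString n a * C)))) := by
      rw [h2 a]
      simp only [mul_assoc]
      rw [hPP a (Cᴴ * (PauliString n a * C))]
    have l2 : (C * Cᴴ) * PauliString n a * (C * Cᴴ) * PauliString n a
        = C * (Cᴴ * (PauliString n a * (C * (Cᴴ * PauliString n a)))) := by
      simp only [mul_assoc]
    rw [l1, l2, Matrix.trace_mul_comm C (Cᴴ * (PauliString n a * (C * (Cᴴ * PauliString n a))))]
    congr 1
    simp only [mul_assoc]
  -- twirl identity
  have htwirl : ∑ a : Fin n → Fin 4, ((F a : ℝ) : ℂ) = (2 : ℂ) ^ n * (T : ℂ) ^ 2 := by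
    have hMtr : (C * Cᴴ).trace = (T : ℂ) := by
      rw [Matrix.trace_mul_comm, htrT]
    calc ∑ a : Fin n → Fin 4, ((F a : ℝ) : ℂ)
        = ∑ a : Fin n → Fin 4,
            ((C * Cᴴ) * (PauliString n a * (C * Cᴴ) * PauliString n a)).trace := by
          refine Finset.sum_congr rfl fun a _ => ?_
          rw [hFtrace a]
          simp only [mul_assoc]
      _ = ((C * Cᴴ) * ∑ a : Fin n → Fin 4,
            PauliString n a * (C * Cᴴ) * PauliString n a).trace := by
          rw [Finset.mul_sum, Matrix.trace_sum]
      _ = ((C * Cᴴ) * (((2 : ℂ) ^ n * (C * Cᴴ).trace) • 1)).trace := by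
          rw [pauli_twirl (C * Cᴴ)]
      _ = (2 : ℂ) ^ n * (T : ℂ) ^ 2 := by
          rw [Matrix.mul_smul, mul_one, Matrix.trace_smul, hMtr, smul_eq_mul]
          ring
  have hFsum : ∑ a : Fin n → Fin 4, F a = 2 ^ n * T ^ 2 := by
    have := htwirl
    rw [← Complex.ofReal_sum] at this
    have h2' : ((∑ a : Fin n → Fin 4, F a : ℝ) : ℂ) = (((2:ℝ) ^ n * T ^ 2 : ℝ) : ℂ) := by
      rw [this]; push_cast; ring
    exact_mod_cast h2'
  -- final real inequality
  set s := Finset.univ.filter (fun a : Fin n → Fin 4 => a ≠ fun _ => 0) with hs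
  have hreal_ineq : ∑ a ∈ s, (r a / T) ^ 2 ≤ (2 : ℝ) ^ (n + k) := by
    have hnormsq : ∀ a, (r a) ^ 2
        = Complex.normSq ((PauliString n a * Cᴴ * PauliString n a * C).trace) := by
      intro a
      rw [hta a, Complex.normSq_ofReal]
      ring
    have hchain : ∑ a ∈ s, (r a) ^ 2 ≤ (2:ℝ) ^ (n + k) * T ^ 2 := by
      calc ∑ a ∈ s, (r a) ^ 2
          ≤ ∑ a ∈ s, (2:ℝ) ^ k * F a := by
            refine Finset.sum_le_sum fun a _ => ?_
            rw [hnormsq a]; exact hkey a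
        _ = (2:ℝ) ^ k * ∑ a ∈ s, F a := by rw [Finset.mul_sum]
        _ ≤ (2:ℝ) ^ k * ∑ a : Fin n → Fin 4, F a := by
            refine mul_le_mul_of_nonneg_left ?_ (by positivity)
            exact Finset.sum_le_sum_of_subset_of_nonneg (Finset.filter_subset _ _)
              (fun a _ _ => hF0 a)
        _ = (2:ℝ) ^ k * (2 ^ n * T ^ 2) := by rw [hFsum]
        _ = (2:ℝ) ^ (n + k) * T ^ 2 := by rw [pow_add]; ring
    have hT2 : (0:ℝ) < T ^ 2 := by positivity
    calc ∑ a ∈ s, (r a / T) ^ 2 = (∑ a ∈ s, (r a) ^ 2) / T ^ 2 := by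
          rw [Finset.sum_div]
          exact Finset.sum_congr rfl fun a _ => by rw [div_pow]
      _ ≤ ((2:ℝ) ^ (n + k) * T ^ 2) / T ^ 2 := by gcongr
      _ = (2:ℝ) ^ (n + k) := by field_simp
  -- cast back to ℂ
  have hLHS : ∑ a ∈ s, ((PauliString n a * Cᴴ * PauliString n a * C).trace
      / (Cᴴ * C).trace) ^ 2 = (((∑ a ∈ s, (r a / T) ^ 2 : ℝ)) : ℂ) := by
    rw [Complex.ofReal_sum]
    refine Finset.sum_congr rfl fun a _ => ?_
    rw [hta a, htrT]
    push_cast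
    ring
  rw [hLHS]
  have hRHS : ((2 : ℂ) ^ (n + k)) = (((2:ℝ) ^ (n + k) : ℝ) : ℂ) := by push_cast; ring
  rw [hRHS]
  exact_mod_cast Complex.real_le_real.mpr hreal_ineq
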